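/- Any sequence z = (z_n) ∈ X_B with ‖z‖_B' ≤ ε satisfying x_{n+1} = F_n(x_n) + z_{n+1}^c for all n (where x_n = y_n + z_n^{s,u} and (y_n) is a (δ,B)-pseudotrajectory, δ = Lε) is a fixed point of the operator Φ = G ∘ S, where S(x)_n = g_{n−1}(x_{n−1}^{s,u}) with g_n(x) = f_n(x + y_n) − f_n(y_n) + F_n(y_n) − y_{n+1}. -/

import Mathlib

/-- A Banach sequence space over ℤ: a linear subspace of all real sequences indexed
by ℤ, equipped with a complete norm which is solid. -/
structure BanachSeqSpace where
  /-- membership in the subspace -/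
  mem : (ℤ → ℝ) → Prop
  /-- the norm -/
  N : (ℤ → ℝ) → ℝ
  zero_mem : mem 0
  add_mem : ∀ s t, mem s → mem t → mem (s + t)
  smul_mem : ∀ (a : ℝ) (s), mem s → mem (a • s)
  N_nonneg : ∀ s, 0 ≤ N s
  N_zero : N 0 = 0
  N_eq_zero : ∀ s, mem s → N s = 0 → s = 0
  N_add : ∀ s t, mem s → mem t → N (s + t) ≤ N s + N t
  N_smul : ∀ (a : ℝ) (s), mem s → N (a • s) = |a| * N s
  /-- solidity: if |s n| ≤ |t n| for all n and t belongs to the space,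
  then so does s, with N s ≤ N t -/
  solid : ∀ s t, mem t → (∀ n : ℤ, |s n| ≤ |t n|) → mem s ∧ N s ≤ N t
  /-- completeness: every Cauchy sequence in the space converges in the space -/
  complete : ∀ u : ℕ → (ℤ → ℝ), (∀ k, mem (u k)) →
    (∀ ε > (0 : ℝ), ∃ K : ℕ, ∀ j ≥ K, ∀ k ≥ K, N (u j - u k) ≤ ε) →
    ∃ v, mem v ∧ ∀ ε > (0 : ℝ), ∃ K : ℕ, ∀ k ≥ K, N (u k - v) ≤ ε

/-- An admissible Banach sequence space: additionally contains all singleton indicator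
sequences with positive norm and is invariant under shifts, which act isometrically. -/
structure AdmissibleBSS extends BanachSeqSpace where
  indicator_mem : ∀ n : ℤ, mem (fun k => if k = n then (1 : ℝ) else 0)
  indicator_pos : ∀ n : ℤ, 0 < N (fun k => if k = n then (1 : ℝ) else 0)
  shift_mem : ∀ (s : ℤ → ℝ) (m : ℤ), mem s → mem (fun n => s (n + m))
  shift_isometry : ∀ (s : ℤ → ℝ) (m : ℤ), mem s → N (fun n => s (n + m)) = N s
variable {X : Type*} [NormedAddCommGroup X] [NormedSpace ℝ X]

/-- The forward cocycle: `fcoc A n k = A (n+k-1) ∘ ⋯ ∘ A n`, so that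
`fcoc A n k = 𝒜(n+k, n)`. -/
def fcoc (A : ℤ → X →L[ℝ] X) (n : ℤ) : ℕ → (X →L[ℝ] X)
  | 0 => ContinuousLinearMap.id ℝ X
  | (k + 1) => (A (n + k)).comp (fcoc A n k)

/-- A partial exponential dichotomy for a sequence `(A_m)_{m ∈ ℤ}` of bounded linear
operators: projections `P¹, P², P³` summing to the identity and commuting with the
dynamics, with the dynamics invertible along the unstable direction (witnessed by the
backward cocycle `V m n = 𝒜(m,n)P_n²` for `m ≤ n`), and exponential bounds. -/
structure PartialDichotomy (A : ℤ → X →L[ℝ] X) where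
  P1 : ℤ → X →L[ℝ] X
  P2 : ℤ → X →L[ℝ] X
  P3 : ℤ → X →L[ℝ] X
  D : ℝ
  b : ℝ
  d : ℝ
  hD : 0 < D
  hb : 0 < b
  hd : 0 < d
  proj1 : ∀ n, (P1 n).comp (P1 n) = P1 n
  proj2 : ∀ n, (P2 n).comp (P2 n) = P2 n
  proj3 : ∀ n, (P3 n).comp (P3 n) = P3 n
  sum_eq : ∀ n (x : X), P1 n x + P2 n x + P3 n x = x
  comm1 : ∀ n, (A n).comp (P1 n) = (P1 (n + 1)).comp (A n)
  comm2 : ∀ n, (A n).comp (P2 n) = (P2 (n + 1)).comp (A n)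
  comm3 : ∀ n, (A n).comp (P3 n) = (P3 (n + 1)).comp (A n)
  /-- the backward cocycle along the unstable direction, `V m n = 𝒜(m,n)P_n²` for `m ≤ n` -/
  V : ℤ → ℤ → X →L[ℝ] X
  V_self : ∀ n, V n n = P2 n
  V_proj : ∀ m n, m ≤ n → (V m n).comp (P2 n) = V m n
  V_range : ∀ m n, m ≤ n → (P2 m).comp (V m n) = V m n
  /-- `𝒜(n,m) ∘ 𝒜(m,n)P_n² = P_n²`: `V m n` inverts the forward dynamics -/
  V_right_inv : ∀ m n, m ≤ n → (fcoc A m (n - m).toNat).comp (V m n) = P2 n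
  /-- `𝒜(m,n) ∘ 𝒜(n,m)P_m² = P_m²` -/
  V_left_inv : ∀ m n, m ≤ n → (V m n).comp ((fcoc A m (n - m).toNat).comp (P2 m)) = P2 m
  /-- `‖𝒜(m,n)P_n¹‖ ≤ D e^{-d(m-n)}` for `m ≥ n` -/
  bound1 : ∀ (n : ℤ) (k : ℕ), ‖(fcoc A n k).comp (P1 n)‖ ≤ D * Real.exp (-d * k)
  /-- `‖𝒜(m,n)P_n²‖ ≤ D e^{-b(n-m)}` for `m ≤ n` -/
  bound2 : ∀ m n, m ≤ n → ‖V m n‖ ≤ D * Real.exp (-b * (n - m))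

/-- Membership in `X_B`: the sequence of norms belongs to `B`. -/
def memXB (B : BanachSeqSpace) (x : ℤ → X) : Prop := B.mem (fun n => ‖x n‖)

/-- The norm on `X_B`. -/
def NXB (B : BanachSeqSpace) (x : ℤ → X) : ℝ := B.N (fun n => ‖x n‖)

/-- Membership in the stable-unstable subspace `X_B^{s,u}`. -/
def memXBsu (B : BanachSeqSpace) {A : ℤ → X →L[ℝ] X} (pd : PartialDichotomy A)
    (x : ℤ → X) : Prop :=
  memXB B x ∧ ∀ n : ℤ, x n = pd.P1 n (x n) + pd.P2 n (x n)

/-- The central component `x^c` of a sequence: `(x^c)_n = P_n³ x_n`. -/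
def centr {A : ℤ → X →L[ℝ] X} (pd : PartialDichotomy A) (x : ℤ → X) : ℤ → X :=
  fun n => pd.P3 n (x n)

/-- The stable-unstable component `x^{s,u}` of a sequence: `(x^{s,u})_n = x_n − P_n³ x_n`. -/
def stun {A : ℤ → X →L[ℝ] X} (pd : PartialDichotomy A) (x : ℤ → X) : ℤ → X :=
  fun n => x n - pd.P3 n (x n)

/-- The adapted norm `‖x‖'_B = max{‖x^c‖_B, ‖x^{s,u}‖_B}` on `X_B`. -/
def Nadapt (B : BanachSeqSpace) {A : ℤ → X →L[ℝ] X} (pd : PartialDichotomy A)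
    (x : ℤ → X) : ℝ :=
  max (NXB B (centr pd x)) (NXB B (stun pd x))

/- STATEMENT 12: any z ∈ X_B with ‖z‖'_B ≤ ε satisfying x_{n+1} = F_n(x_n) + z_{n+1}^c
(x_n = y_n + z_n^{s,u}) for a (δ,B)-pseudotrajectory (y_n), δ = Lε, is a fixed point of
Φ = G ∘ S, where S(x)_n = g_{n−1}(x_{n−1}^{s,u}) and
g_n(x) = f_n(x + y_n) − f_n(y_n) + F_n(y_n) − y_{n+1}. -/
theorem quasi_shadow_is_fixed_point
    (X : Type*) [NormedAddCommGroup X] [NormedSpace ℝ X] [CompleteSpace X]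
    (B : AdmissibleBSS) (A : ℤ → X →L[ℝ] X) (pd : PartialDichotomy A)
    (c : ℝ) (hc : 0 ≤ c)
    (f : ℤ → X → X) (hf : ∀ (n : ℤ) (x y : X), ‖f n x - f n y‖ ≤ c * ‖x - y‖)
    (F : ℤ → X → X) (hF : ∀ (n : ℤ) (x : X), F n x = A n x + f n x)
    (𝔸 : (ℤ → X) → (ℤ → X))
    (h𝔸map : ∀ y, memXBsu B.toBanachSeqSpace pd y → memXBsu B.toBanachSeqSpace pd (𝔸 y))
    (h𝔸char : ∀ x y, memXBsu B.toBanachSeqSpace pd x → memXBsu B.toBanachSeqSpace pd y →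
      (𝔸 y = x ↔ ∀ n : ℤ, x n - A (n - 1) (x (n - 1)) = y n))
    (G : (ℤ → X) → (ℤ → X))
    (hG : ∀ x : ℤ → X, G x = -centr pd x + 𝔸 (stun pd x))
    (normG : ℝ) (hnormG0 : 0 < normG)
    (hnormG : ∀ x, memXB B.toBanachSeqSpace x →
      Nadapt B.toBanachSeqSpace pd (G x) ≤ normG * Nadapt B.toBanachSeqSpace pd x)
    (hsmall : 4 * c * pd.D * (1 + 2 * pd.D) * normG < 1)
    -- the quasi-shadowing constant and the pseudotrajectory
    (L : ℝ) (hL : 0 < L) (ε : ℝ) (hε : 0 < ε) (δ : ℝ) (hδ : δ = L * ε)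
    (y : ℤ → X)
    (hy1 : memXB B.toBanachSeqSpace (fun n => y (n + 1) - F n (y n)))
    (hy2 : NXB B.toBanachSeqSpace (fun n => y (n + 1) - F n (y n)) ≤ δ)
    -- the maps g and S
    (g : ℤ → X → X)
    (hg : ∀ (n : ℤ) (x : X), g n x = f n (x + y n) - f n (y n) + F n (y n) - y (n + 1))
    (S : (ℤ → X) → (ℤ → X))
    (hS : ∀ (x : ℤ → X) (n : ℤ), S x n = g (n - 1) (stun pd x (n - 1))) :
    ∀ z : ℤ → X,
      memXB B.toBanachSeqSpace z →
      Nadapt B.toBanachSeqSpace pd z ≤ ε →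
      (∀ n : ℤ, y (n + 1) + stun pd z (n + 1)
        = F n (y n + stun pd z n) + centr pd z (n + 1)) →
      G (S z) = z := by
  intro z hzmem _hznorm hz
  -- projector norm bounds
  have hP1bd : ∀ (n : ℤ) (v : X), ‖pd.P1 n v‖ ≤ pd.D * ‖v‖ := by
    intro n v
    have h := pd.bound1 n 0
    simp [fcoc] at h
    calc ‖pd.P1 n v‖ ≤ ‖pd.P1 n‖ * ‖v‖ := (pd.P1 n).le_opNorm v
      _ ≤ pd.D * ‖v‖ := by
        have := norm_nonneg v
        nlinarith
  have hP2bd : ∀ (n : ℤ) (v : X), ‖pd.P2 n v‖ ≤ pd.D * ‖v‖ := by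
    intro n v
    have h := pd.bound2 n n le_rfl
    rw [pd.V_self n] at h
    simp at h
    calc ‖pd.P2 n v‖ ≤ ‖pd.P2 n‖ * ‖v‖ := (pd.P2 n).le_opNorm v
      _ ≤ pd.D * ‖v‖ := by
        have := norm_nonneg v
        nlinarith
  -- P3 kills stable-unstable part
  have hP3stun : ∀ (n : ℤ) (v : X), pd.P3 n (v - pd.P3 n v) = 0 := by
    intro n v
    have h := congrArg (fun T : X →L[ℝ] X => T v) (pd.proj3 n)
    simp only [ContinuousLinearMap.comp_apply] at h
    rw [map_sub, h, sub_self]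
  -- v - P3 v = P1 v + P2 v
  have hsum' : ∀ (n : ℤ) (v : X), v - pd.P3 n v = pd.P1 n v + pd.P2 n v := by
    intro n v
    have h := pd.sum_eq n v
    nth_rewrite 1 [← h]
    abel
  -- invariance of s,u part
  have key : ∀ (n : ℤ) (v : X),
      v - pd.P3 n v = pd.P1 n (v - pd.P3 n v) + pd.P2 n (v - pd.P3 n v) := by
    intro n v
    have h := pd.sum_eq n (v - pd.P3 n v)
    rw [hP3stun n v, add_zero] at h
    exact h.symm
  -- the formula for S z
  have hSz : ∀ n : ℤ, S z n
      = stun pd z n - A (n - 1) (stun pd z (n - 1)) - centr pd z n := by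
    intro n
    have h := hz (n - 1)
    rw [sub_add_cancel, hF, map_add] at h
    have hf' : f (n - 1) (y (n - 1) + stun pd z (n - 1))
        = y n + stun pd z n - A (n - 1) (y (n - 1))
          - A (n - 1) (stun pd z (n - 1)) - centr pd z n := by
      rw [h]; abel
    rw [hS, hg, hF, add_comm (stun pd z (n - 1)) (y (n - 1)), hf', sub_add_cancel]
    abel
  -- central component of S z
  have hcentrSz : ∀ n : ℤ, centr pd (S z) n = -(centr pd z n) := by
    intro n
    show pd.P3 n (S z n) = _
    rw [hSz n]
    have hc3 : pd.P3 n (A (n - 1) (stun pd z (n - 1))) = 0 := by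
      have h := congrArg (fun T : X →L[ℝ] X => T (stun pd z (n - 1))) (pd.comm3 (n - 1))
      simp only [ContinuousLinearMap.comp_apply, sub_add_cancel] at h
      have : pd.P3 (n - 1) (stun pd z (n - 1)) = 0 := hP3stun (n - 1) (z (n - 1))
      rw [this, map_zero] at h
      exact h.symm
    have hcc : pd.P3 n (centr pd z n) = centr pd z n := by
      have h := congrArg (fun T : X →L[ℝ] X => T (z n)) (pd.proj3 n)
      simp only [ContinuousLinearMap.comp_apply] at h
      exact h
    have h0 : pd.P3 n (stun pd z n) = 0 := hP3stun n (z n)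
    rw [map_sub, map_sub, hc3, hcc, h0]
    abel
  -- stable-unstable component of S z
  have hstunSz : ∀ n : ℤ, stun pd (S z) n
      = stun pd z n - A (n - 1) (stun pd z (n - 1)) := by
    intro n
    show S z n - pd.P3 n (S z n) = _
    have : pd.P3 n (S z n) = centr pd (S z) n := rfl
    rw [this, hcentrSz, hSz]
    abel
  -- membership of stun z
  have hmem_stun : memXB B.toBanachSeqSpace (stun pd z) := by
    have hb : ∀ n : ℤ, |‖stun pd z n‖| ≤ |((2 * pd.D) • fun n => ‖z n‖) n| := by
      intro n
      have h1 : ‖stun pd z n‖ ≤ 2 * pd.D * ‖z n‖ := by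
        show ‖z n - pd.P3 n (z n)‖ ≤ _
        rw [hsum' n (z n)]
        calc ‖pd.P1 n (z n) + pd.P2 n (z n)‖
            ≤ ‖pd.P1 n (z n)‖ + ‖pd.P2 n (z n)‖ := norm_add_le _ _
          _ ≤ pd.D * ‖z n‖ + pd.D * ‖z n‖ := add_le_add (hP1bd n _) (hP2bd n _)
          _ = 2 * pd.D * ‖z n‖ := by ring
      have h2 : (0:ℝ) ≤ 2 * pd.D * ‖z n‖ :=
        mul_nonneg (by nlinarith [pd.hD]) (norm_nonneg _)
      simp only [Pi.smul_apply, smul_eq_mul]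
      rw [abs_of_nonneg (norm_nonneg _), abs_of_nonneg h2]
      exact h1
    exact (B.solid _ _ (B.smul_mem (2 * pd.D) _ hzmem) hb).1
  -- membership of centr z
  have hmem_centr : memXB B.toBanachSeqSpace (centr pd z) := by
    have hb : ∀ n : ℤ, |‖centr pd z n‖| ≤ |((1 + 2 * pd.D) • fun n => ‖z n‖) n| := by
      intro n
      have h1 : ‖centr pd z n‖ ≤ (1 + 2 * pd.D) * ‖z n‖ := by
        have heq : centr pd z n = z n - (pd.P1 n (z n) + pd.P2 n (z n)) := by
          rw [← hsum' n (z n)]; show pd.P3 n (z n) = _; abel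
        rw [heq]
        calc ‖z n - (pd.P1 n (z n) + pd.P2 n (z n))‖
            ≤ ‖z n‖ + ‖pd.P1 n (z n) + pd.P2 n (z n)‖ := norm_sub_le _ _
          _ ≤ ‖z n‖ + (‖pd.P1 n (z n)‖ + ‖pd.P2 n (z n)‖) := by
              exact add_le_add_right (norm_add_le _ _) _
          _ ≤ ‖z n‖ + (pd.D * ‖z n‖ + pd.D * ‖z n‖) := by
              exact add_le_add_right (add_le_add (hP1bd n _) (hP2bd n _)) _
          _ = (1 + 2 * pd.D) * ‖z n‖ := by ring
      have h2 : (0:ℝ) ≤ (1 + 2 * pd.D) * ‖z n‖ :=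
        mul_nonneg (by nlinarith [pd.hD]) (norm_nonneg _)
      simp only [Pi.smul_apply, smul_eq_mul]
      rw [abs_of_nonneg (norm_nonneg _), abs_of_nonneg h2]
      exact h1
    exact (B.solid _ _ (B.smul_mem (1 + 2 * pd.D) _ hzmem) hb).1
  have hmem_su1 : memXBsu B.toBanachSeqSpace pd (stun pd z) :=
    ⟨hmem_stun, fun n => key n (z n)⟩
  -- membership of stun (S z)
  have hmem_Sstun : memXB B.toBanachSeqSpace (stun pd (S z)) := by
    set t : ℤ → ℝ := (fun n => c * ‖stun pd z (n + (-1))‖)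
        + (fun n => ‖y (n + (-1) + 1) - F (n + (-1)) (y (n + (-1)))‖)
        + (fun n => ‖centr pd z n‖) with ht
    have hmt : B.mem t := by
      apply B.add_mem
      apply B.add_mem
      · have h1 := B.shift_mem (fun n => ‖stun pd z n‖) (-1) hmem_stun
        have h2 := B.smul_mem c _ h1
        have : (c • fun n : ℤ => ‖stun pd z (n + (-1))‖)
            = fun n : ℤ => c * ‖stun pd z (n + (-1))‖ := by
          funext n; simp
        rwa [this] at h2
      · exact B.shift_mem _ (-1) hy1
      · exact hmem_centr
    have hb : ∀ n : ℤ, |‖stun pd (S z) n‖| ≤ |t n| := by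
      intro n
      have hd : y (n + (-1) + 1) - F (n + (-1)) (y (n + (-1)))
          = y n - F (n - 1) (y (n - 1)) := by
        norm_num [sub_eq_add_neg]
      have hSbd : ‖S z n‖ ≤ c * ‖stun pd z (n - 1)‖ + ‖y n - F (n - 1) (y (n - 1))‖ := by
        rw [hS, hg]
        have heq : f (n - 1) (stun pd z (n - 1) + y (n - 1)) - f (n - 1) (y (n - 1))
            + F (n - 1) (y (n - 1)) - y (n - 1 + 1)
            = (f (n - 1) (stun pd z (n - 1) + y (n - 1)) - f (n - 1) (y (n - 1)))
              + (F (n - 1) (y (n - 1)) - y (n - 1 + 1)) := by abel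
        rw [heq, sub_add_cancel]
        calc ‖(f (n - 1) (stun pd z (n - 1) + y (n - 1)) - f (n - 1) (y (n - 1)))
              + (F (n - 1) (y (n - 1)) - y n)‖
            ≤ ‖f (n - 1) (stun pd z (n - 1) + y (n - 1)) - f (n - 1) (y (n - 1))‖
              + ‖F (n - 1) (y (n - 1)) - y n‖ := norm_add_le _ _
          _ ≤ c * ‖stun pd z (n - 1) + y (n - 1) - y (n - 1)‖
              + ‖y n - F (n - 1) (y (n - 1))‖ := by
              rw [norm_sub_rev (F (n - 1) (y (n - 1)))]
              exact add_le_add_left (hf (n - 1) _ _) _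
          _ = c * ‖stun pd z (n - 1)‖ + ‖y n - F (n - 1) (y (n - 1))‖ := by
              rw [add_sub_cancel_right]
      have h1 : ‖stun pd (S z) n‖ ≤ t n := by
        have hrw : stun pd (S z) n = S z n + centr pd z n := by
          rw [hstunSz n, hSz n]; abel
        rw [hrw]
        have : t n = c * ‖stun pd z (n + (-1))‖
            + ‖y (n + (-1) + 1) - F (n + (-1)) (y (n + (-1)))‖ + ‖centr pd z n‖ := rfl
        rw [this, hd]
        have hn1 : (n + (-1) : ℤ) = n - 1 := by ring
        rw [hn1]
        calc ‖S z n + centr pd z n‖ ≤ ‖S z n‖ + ‖centr pd z n‖ := norm_add_le _ _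
          _ ≤ c * ‖stun pd z (n - 1)‖ + ‖y n - F (n - 1) (y (n - 1))‖ + ‖centr pd z n‖ :=
            add_le_add_left hSbd _
      have h2 : (0:ℝ) ≤ t n := le_trans (norm_nonneg _) h1
      rw [abs_of_nonneg (norm_nonneg _), abs_of_nonneg h2]
      exact h1
    exact (B.solid _ _ hmt hb).1
  have hmem_su2 : memXBsu B.toBanachSeqSpace pd (stun pd (S z)) :=
    ⟨hmem_Sstun, fun n => key n (S z n)⟩
  -- the main identity
  have hA : 𝔸 (stun pd (S z)) = stun pd z := by
    rw [h𝔸char (stun pd z) (stun pd (S z)) hmem_su1 hmem_su2]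
    intro n
    exact (hstunSz n).symm
  funext n
  rw [hG, hA]
  show -(centr pd (S z) n) + stun pd z n = z n
  rw [hcentrSz, neg_neg]
  show pd.P3 n (z n) + (z n - pd.P3 n (z n)) = z n
  abel
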